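/- Let p ≥ 2 be a prime number and let Z_p be the cyclic group of order p. The characteristic polynomial of the adjacency matrix of the strong power graph P_s(Z_p) equals x · (x+1)^{p-2} · (x + 2 - p). -/

import Mathlib

/-- The strong power graph of the cyclic group `ZMod n` (written additively):
two distinct vertices `x` and `y` are adjacent iff `a • x = b • y` for some
positive integers `a, b < n`. -/
def strongPowerGraphZ (n : ℕ) : SimpleGraph (ZMod n) where
  Adj x y := x ≠ y ∧ ∃ a b : ℕ, 0 < a ∧ a < n ∧ 0 < b ∧ b < n ∧ a • x = b • y
  symm := by
    refine ⟨?_⟩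
    rintro x y ⟨h, a, b, ha, ha', hb, hb', hab⟩
    exact ⟨h.symm, b, a, hb, hb', ha, ha', hab.symm⟩
  loopless := by
    refine ⟨?_⟩
    rintro x ⟨h, -⟩
    exact h rfl

/-- The distance matrix (with real entries) of the strong power graph of `ZMod n`. -/
noncomputable def distMatrixZ (n : ℕ) [NeZero n] : Matrix (ZMod n) (ZMod n) ℝ :=
  Matrix.of fun i j => ((strongPowerGraphZ n).dist i j : ℝ)

open Classical in
/-- The adjacency matrix (with real entries) of the strong power graph of `ZMod n`. -/
noncomputable def adjMatrixZ (n : ℕ) [NeZero n] : Matrix (ZMod n) (ZMod n) ℝ :=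
  Matrix.of fun i j => if (strongPowerGraphZ n).Adj i j then 1 else 0

lemma strongPowerGraphZ_adj_prime (p : ℕ) [NeZero p] (hp : p.Prime) (x y : ZMod p) :
    (strongPowerGraphZ p).Adj x y ↔ x ≠ y ∧ x ≠ 0 ∧ y ≠ 0 := by
  haveI : Fact p.Prime := ⟨hp⟩
  constructor
  · rintro ⟨hxy, a, b, ha0, hap, hb0, hbp, hab⟩
    have hane : (a : ZMod p) ≠ 0 := by
      rw [Ne, ZMod.natCast_eq_zero_iff]
      exact fun h => absurd (Nat.le_of_dvd ha0 h) (not_le.2 hap)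
    have hbne : (b : ZMod p) ≠ 0 := by
      rw [Ne, ZMod.natCast_eq_zero_iff]
      exact fun h => absurd (Nat.le_of_dvd hb0 h) (not_le.2 hbp)
    rw [nsmul_eq_mul, nsmul_eq_mul] at hab
    refine ⟨hxy, ?_, ?_⟩
    · rintro rfl
      rw [mul_zero] at hab
      exact hxy (by rw [(mul_eq_zero.1 hab.symm).resolve_left hbne])
    · rintro rfl
      rw [mul_zero] at hab
      exact hxy ((mul_eq_zero.1 hab).resolve_left hane)
  · rintro ⟨hxy, hx, hy⟩
    refine ⟨hxy, (y * x⁻¹).val, 1, ?_, ZMod.val_lt _, one_pos, hp.one_lt, ?_⟩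
    · rw [pos_iff_ne_zero, Ne, ZMod.val_eq_zero]
      exact mul_ne_zero hy (inv_ne_zero hx)
    · rw [nsmul_eq_mul, nsmul_eq_mul, Nat.cast_one, one_mul, ZMod.natCast_val,
        ZMod.cast_id, mul_assoc, inv_mul_cancel₀ hx, mul_one]

open Polynomial in
/-- For a prime `p`, the characteristic polynomial of the adjacency matrix of the strong
power graph of `ZMod p` is `x * (x+1)^(p-2) * (x + 2 - p)`. -/
theorem adjMatrixZ_charpoly_prime (p : ℕ) [NeZero p] (hp : p.Prime) :
    (adjMatrixZ p).charpoly = X * (X + 1) ^ (p - 2) * (X + C ((2 : ℝ) - (p : ℝ))) := by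
  classical
  haveI : Fact p.Prime := ⟨hp⟩
  have hp2 : 2 ≤ p := hp.two_le
  obtain ⟨q, hq⟩ : ∃ q, p = q + 2 := ⟨p - 2, by omega⟩
  have hcard : Fintype.card (ZMod p) = p := ZMod.card p
  -- the 0/1 indicator of nonzero elements
  set w : ZMod p → ℝ := fun i => if i = 0 then 0 else 1 with hw
  apply Polynomial.eq_of_infinite_eval_eq
  apply Set.Infinite.mono (s := ({(0 : ℝ), -1} : Set ℝ)ᶜ)
  swap
  · exact Set.Finite.infinite_compl ((Set.finite_singleton (-1 : ℝ)).insert 0)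
  intro r hr
  simp only [Set.mem_compl_iff, Set.mem_insert_iff, Set.mem_singleton_iff, not_or] at hr
  obtain ⟨hr0, hrm1⟩ := hr
  have hr1 : r + 1 ≠ 0 := fun h => hrm1 (by linarith)
  have key : ∀ i, w i * w i = w i := by
    intro i; by_cases h : i = 0 <;> simp [hw, h]
  -- evaluate the characteristic polynomial at r
  rw [Set.mem_setOf_eq, Matrix.charpoly, ← Polynomial.coe_evalRingHom, RingHom.map_det, RingHom.mapMatrix_apply]
  have hmap : (Matrix.charmatrix (adjMatrixZ p)).map (Polynomial.evalRingHom r)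
      = Matrix.diagonal (fun i => r + w i)
        + Matrix.replicateCol Unit (fun i => -w i) * Matrix.replicateRow Unit w := by
    ext i j
    by_cases hij : i = j
    · subst hij
      simp only [Matrix.map_apply, Matrix.charmatrix_apply_eq, map_sub,
        Polynomial.coe_evalRingHom, Polynomial.eval_X, Polynomial.eval_C,
        Matrix.add_apply, Matrix.diagonal_apply_eq, Matrix.mul_apply,
        Matrix.replicateCol_apply, Matrix.replicateRow_apply, Finset.univ_unique, Finset.sum_singleton]
      have : adjMatrixZ p i i = 0 := by
        simp only [adjMatrixZ, Matrix.of_apply, if_neg ((strongPowerGraphZ p).loopless.irrefl i)]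
      rw [this]
      simp only [Polynomial.eval_sub, Polynomial.eval_X, Polynomial.eval_C]
      rw [neg_mul, key i]; ring
    · simp only [Matrix.map_apply, Matrix.charmatrix_apply_ne _ _ _ hij, map_neg,
        Polynomial.coe_evalRingHom, Polynomial.eval_C,
        Matrix.add_apply, Matrix.diagonal_apply_ne _ hij, Matrix.mul_apply,
        Matrix.replicateCol_apply, Matrix.replicateRow_apply, Finset.univ_unique, Finset.sum_singleton]
      have : adjMatrixZ p i j = if i ≠ 0 ∧ j ≠ 0 then 1 else 0 := by
        simp only [adjMatrixZ, Matrix.of_apply, strongPowerGraphZ_adj_prime p hp]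
        by_cases h1 : i ≠ 0 ∧ j ≠ 0
        · rw [if_pos ⟨hij, h1.1, h1.2⟩, if_pos h1]
        · rw [if_neg (fun h => h1 ⟨h.2.1, h.2.2⟩), if_neg h1]
      rw [this]
      by_cases h1 : i = 0 <;> by_cases h2 : j = 0 <;> simp [hw, h1, h2]
  rw [hmap]
  -- determinant of the diagonal part
  have hdet : (Matrix.diagonal (fun i => r + w i)).det = r * (r + 1) ^ (q + 1) := by
    rw [Matrix.det_diagonal, ← Finset.mul_prod_erase Finset.univ _ (Finset.mem_univ (0 : ZMod p))]
    have h0 : r + w 0 = r := by simp [hw]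
    rw [h0]
    congr 1
    rw [Finset.prod_congr rfl (fun i hi => show r + w i = r + 1 by
      simp [hw, Finset.ne_of_mem_erase hi]), Finset.prod_const,
      Finset.card_erase_of_mem (Finset.mem_univ _), Finset.card_univ, hcard]
    congr 1
    omega
  have hdetne : (Matrix.diagonal (fun i => r + w i)).det ≠ 0 := by
    rw [hdet]
    exact mul_ne_zero hr0 (pow_ne_zero _ hr1)
  rw [Matrix.det_add_replicateCol_mul_replicateRow (isUnit_iff_ne_zero.2 hdetne)]
  -- compute the inverse of the diagonal matrix
  have hinv : (Matrix.diagonal (fun i => r + w i))⁻¹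
      = Matrix.diagonal (fun i => (r + w i)⁻¹) := by
    apply Matrix.inv_eq_right_inv
    rw [Matrix.diagonal_mul_diagonal]
    convert Matrix.diagonal_one using 2
    ext i
    refine mul_inv_cancel₀ ?_
    by_cases h : i = 0 <;> simp [hw, h, hr0, hr1]
  rw [hinv]
  -- the 1×1 determinant
  have hsum : (1 + Matrix.replicateRow Unit w * Matrix.diagonal (fun i => (r + w i)⁻¹)
      * Matrix.replicateCol Unit (fun i => -w i)).det = 1 - (q + 1) * (r + 1)⁻¹ := by
    rw [Matrix.det_unique]
    simp only [Matrix.add_apply, Matrix.one_apply_eq, Matrix.mul_apply,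
      Matrix.replicateRow_apply, Matrix.replicateCol_apply, Matrix.diagonal_apply, Finset.sum_ite_eq,
      Finset.mem_univ, if_true, mul_ite, mul_zero, ite_mul, zero_mul]
    have hterm : ∀ j : ZMod p,
        (∑ k : ZMod p, if k = j then w k * (r + w k)⁻¹ else 0) * -w j
          = if j = 0 then 0 else -(r + 1)⁻¹ := by
      intro j
      rw [Finset.sum_ite_eq' Finset.univ j (fun k => w k * (r + w k)⁻¹),
        if_pos (Finset.mem_univ j)]
      by_cases h : j = 0
      · simp [hw, h]
      · simp [hw, h]
    rw [Finset.sum_congr rfl (fun j _ => hterm j),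
      ← Finset.add_sum_erase _ _ (Finset.mem_univ (0 : ZMod p)), if_pos rfl,
      Finset.sum_congr rfl (fun j hj => if_neg (Finset.ne_of_mem_erase hj)),
      Finset.sum_const, Finset.card_erase_of_mem (Finset.mem_univ _),
      Finset.card_univ, hcard]
    have hc : p - 1 = q + 1 := by omega
    rw [hc, nsmul_eq_mul]
    push_cast
    ring
  rw [hdet, hsum]
  -- evaluate the right-hand side
  rw [Polynomial.coe_evalRingHom]
  simp only [Polynomial.eval_mul, Polynomial.eval_pow, Polynomial.eval_add,
    Polynomial.eval_X, Polynomial.eval_one, Polynomial.eval_C]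
  have hq2 : p - 2 = q := by omega
  have hpq : (p : ℝ) = q + 2 := by rw [hq]; push_cast; ring
  rw [hq2, hpq]
  have : (r + 1) ^ (q + 1) = (r + 1) ^ q * (r + 1) := pow_succ _ _
  rw [this]
  field_simp
  ring
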